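/- The chromatic number of the Hadamard graph G_12 is strictly greater than 12. -/

import Mathlib

set_option maxRecDepth 100000

/-- The Hadamard graph `G_12`: vertices are bitstrings of length 12,
adjacency is Hamming distance 6. -/
def hadamardGraph12 : SimpleGraph (Fin 12 → Bool) where
  Adj u v := u ≠ v ∧ hammingDist u v = 6
  symm := ⟨by
    intro u v h
    exact ⟨h.1.symm, by rw [hammingDist_comm]; exact h.2⟩⟩
  loopless := ⟨by intro u h; exact h.1 rfl⟩
abbrev V12 := Fin 12 → Bool

def hRows : Fin 12 → V12 :=
![![true, true, true, true, true, true, true, true, true, true, true, true],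
![true, false, false, true, false, false, false, true, true, true, false, true],
![true, true, false, false, true, false, false, false, true, true, true, false],
![true, false, true, false, false, true, false, false, false, true, true, true],
![true, true, false, true, false, false, true, false, false, false, true, true],
![true, true, true, false, true, false, false, true, false, false, false, true],
![true, true, true, true, false, true, false, false, true, false, false, false],
![true, false, true, true, true, false, true, false, false, true, false, false],
![true, false, false, true, true, true, false, true, false, false, true, false],
![true, false, false, false, true, true, true, false, true, false, false, true],
![true, true, false, false, false, true, true, true, false, true, false, false],
![true, false, true, false, false, false, true, true, true, false, true, false]]

lemma hRows_dist : ∀ i j : Fin 12, i ≠ j → hammingDist (hRows i) (hRows j) = 6 := by decide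

def xv (x v : V12) : V12 := fun i => xor (x i) (v i)

lemma xv_comm (x v : V12) : xv x v = xv v x := by
  funext i; simp [xv, Bool.xor_comm]

lemma xv_invol (x v : V12) : xv (xv x v) v = x := by
  funext i; simp [xv]

lemma xv_right_inj {a b v : V12} (h : xv a v = xv b v) : a = b := by
  have := congrArg (fun z => xv z v) h
  simpa [xv_invol] using this

lemma xv_dist (x u v : V12) : hammingDist (xv u x) (xv v x) = hammingDist u v := by
  unfold hammingDist xv
  congr 1
  apply Finset.filter_congr
  intro i _
  cases u i <;> cases v i <;> cases x i <;> simp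

def P12 (x v : V12) : Prop := ∃ i : Fin 12, x = xv (hRows i) v

instance (x v : V12) : Decidable (P12 x v) := by
  unfold P12; infer_instance

lemma row_count (v : V12) :
    (Finset.univ.filter fun x => P12 x v).card = 12 := by
  have himg : (Finset.univ.filter fun x => P12 x v)
      = Finset.univ.image (fun i : Fin 12 => xv (hRows i) v) := by
    ext x
    simp [P12, eq_comm]
    exact Finset.mem_filter_univ (p := fun x => P12 x v) x
  rw [himg, Finset.card_image_of_injective _ ?_, Finset.card_univ, Fintype.card_fin]
  intro i j hij
  have h2 : hRows i = hRows j := xv_right_inj hij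
  by_contra hne
  have := hRows_dist i j hne
  rw [h2] at this
  simp [hammingDist_self] at this

lemma col_count {I : Finset V12}
    (hI : ∀ v ∈ I, ∀ w ∈ I, v ≠ w → ¬ hadamardGraph12.Adj v w) (x : V12) :
    (I.filter fun v => P12 x v).card ≤ 1 := by
  apply Finset.card_le_one.2
  intro v hv w hw
  simp only [Finset.mem_filter] at hv hw
  obtain ⟨hvI, i, hi⟩ := hv
  obtain ⟨hwI, j, hj⟩ := hw
  by_contra hne
  apply hI v hvI w hwI hne
  have hri : hRows i = xv x v := by rw [hi, xv_invol]
  have hrj : hRows j = xv x w := by rw [hj, xv_invol]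
  have hijne : i ≠ j := by
    intro hij
    apply hne
    apply xv_right_inj (v := x)
    rw [← xv_comm x v, ← xv_comm x w, ← hri, ← hrj, hij]
  have hd : hammingDist v w = 6 := by
    have := hRows_dist i j hijne
    rwa [hri, hrj, xv_comm x v, xv_comm x w, xv_dist] at this
  exact ⟨hne, hd⟩

lemma card_V12 : Fintype.card V12 = 4096 := by
  simp [Fintype.card_fun]

lemma indep_card_le {I : Finset V12}
    (hI : ∀ v ∈ I, ∀ w ∈ I, v ≠ w → ¬ hadamardGraph12.Adj v w) :
    I.card ≤ 341 := by
  have dc : ∑ v ∈ I, (Finset.univ.filter fun x => P12 x v).card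
      = ∑ x : V12, (I.filter fun v => P12 x v).card := by
    simp_rw [Finset.card_filter]
    exact Finset.sum_comm
  have lhs : ∑ v ∈ I, (Finset.univ.filter fun x => P12 x v).card = 12 * I.card := by
    rw [Finset.sum_congr rfl fun v _ => row_count v]
    simp [mul_comm]
  have rhs : ∑ x : V12, (I.filter fun v => P12 x v).card ≤ 4096 := by
    calc ∑ x : V12, (I.filter fun v => P12 x v).card
        ≤ ∑ _x : V12, 1 := Finset.sum_le_sum fun x _ => col_count hI x
      _ = 4096 := by simp [Finset.card_univ, card_V12]
  have : 12 * I.card ≤ 4096 := by rw [← lhs, dc]; exact rhs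
  omega

/-- The chromatic number of the Hadamard graph `G_12` is strictly greater than 12. -/
theorem chromaticNumber_G12_gt_12 : (12 : ℕ∞) < hadamardGraph12.chromaticNumber := by
  by_contra h
  push_neg at h
  have hc : hadamardGraph12.Colorable 12 := by
    rw [← SimpleGraph.chromaticNumber_le_iff_colorable]
    exact h
  obtain ⟨c⟩ := hc
  have hcard : (Finset.univ : Finset (Fin 12)).card * 341
      < (Finset.univ : Finset V12).card := by
    simp [Finset.card_univ, card_V12]
  obtain ⟨y, _, hy⟩ := Finset.exists_lt_card_fiber_of_mul_lt_card_of_maps_to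
    (fun v (_ : v ∈ Finset.univ) => Finset.mem_univ (c v)) hcard
  set I := Finset.univ.filter fun v => c v = y with hIdef
  have hind : ∀ v ∈ I, ∀ w ∈ I, v ≠ w → ¬ hadamardGraph12.Adj v w := by
    intro v hv w hw _ hadj
    simp only [hIdef, Finset.mem_filter] at hv hw
    exact c.valid hadj (hv.2.trans hw.2.symm)
  have := indep_card_le hind
  omega
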